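/- arXiv:2412.14269 — 4 statements merged into one kernel-verified Lean document; each statement's English description precedes it below -/
import Mathlib

section
/- In the primal-dual penalty method with updates c_{n+1} = c_n + s_n[ω(dist(0, Φ(x_n))) + δ_n], s_n ≥ s* > 0, δ_n ≥ 0, if the penalty function F(·, c_0) is bounded below on Q, then dist(0, Φ(x_n)) → 0 as n → ∞. -/
open Filter Topology Metric Set

/-- in the primal-dual penalty method with updates
c_{n+1} = c_n + s_n [ω(dist(0, Φ(x_n))) + δ_n], s_n ≥ s* > 0, δ_n ≥ 0, if the penalty
function F(·, c_0) is bounded below on Q, then dist(0, Φ(x_n)) → 0. -/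
theorem penalty_infeasibility_tendsto_zero
    {X Y : Type*} [MetricSpace X] [NormedAddCommGroup Y]
    (Q : Set X) (hQne : Q.Nonempty) (hQc : IsClosed Q)
    (f : X → ℝ) (Φ : X → Set Y)
    (ω : ℝ → ℝ) (hωnn : ∀ t, 0 ≤ ω t) (hω0 : ω 0 = 0)
    (hmono : MonotoneOn ω (Ici 0))
    (τ : ℝ) (hτ : 0 < τ)
    (hstrict : StrictMonoOn ω (Ico 0 τ)) (hcont : ContinuousOn ω (Ico 0 τ))
    (hfeas : {x | x ∈ Q ∧ (0 : Y) ∈ Φ x}.Nonempty)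
    (hfb : BddBelow (f '' {x | x ∈ Q ∧ (0 : Y) ∈ Φ x}))
    (xs : ℕ → X) (cs : ℕ → ℝ) (εs ss δs : ℕ → ℝ) (sstar : ℝ)
    (hc0 : 0 ≤ cs 0)
    (hbdd : BddBelow ((fun x => f x + cs 0 * ω (infDist (0 : Y) (Φ x))) '' Q))
    (hε0 : ∀ n, 0 ≤ εs n) (hεb : BddAbove (Set.range εs))
    (hsstar : 0 < sstar) (hss : ∀ n, sstar ≤ ss n) (hδ : ∀ n, 0 ≤ δs n)
    (hupd : ∀ n, cs (n + 1) = cs n + ss n * (ω (infDist (0 : Y) (Φ (xs n))) + δs n))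
    (hxQ : ∀ n, xs n ∈ Q)
    (hopt : ∀ n, ∀ x ∈ Q,
      f (xs n) + cs n * ω (infDist (0 : Y) (Φ (xs n))) ≤
        f x + cs n * ω (infDist (0 : Y) (Φ x)) + εs n) :
    Tendsto (fun n => infDist (0 : Y) (Φ (xs n))) atTop (𝓝 0) := by
  set d : ℕ → ℝ := fun n => infDist (0 : Y) (Φ (xs n)) with hd
  have hd0 : ∀ n, 0 ≤ d n := fun n => infDist_nonneg
  have hw0 : ∀ n, 0 ≤ ω (d n) := fun n => hωnn _
  have hmonoc : Monotone cs := by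
    apply monotone_nat_of_le_succ
    intro n
    rw [hupd n]
    have : 0 ≤ ss n * (ω (d n) + δs n) :=
      mul_nonneg (le_trans hsstar.le (hss n)) (add_nonneg (hw0 n) (hδ n))
    linarith
  obtain ⟨xbar, hxbarQ, hxbarf⟩ := hfeas
  obtain ⟨E, hE⟩ := hεb
  obtain ⟨B, hB⟩ := hbdd
  have hεE : ∀ n, εs n ≤ E := fun n => hE ⟨n, rfl⟩
  have hBle : ∀ x ∈ Q, B ≤ f x + cs 0 * ω (infDist (0 : Y) (Φ x)) :=
    fun x hx => hB ⟨x, hx, rfl⟩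
  have hdxbar : infDist (0 : Y) (Φ xbar) = 0 := infDist_zero_of_mem hxbarf
  set M := f xbar + E - B with hM
  have hkey : ∀ n, (cs n - cs 0) * ω (d n) ≤ M := by
    intro n
    have h1 := hopt n xbar hxbarQ
    rw [hdxbar, hω0, mul_zero, add_zero] at h1
    have h2 := hBle (xs n) (hxQ n)
    have h3 := hεE n
    nlinarith [hw0 n]
  rw [Metric.tendsto_atTop]
  intro ε hε
  set ε' := min ε (τ / 2) with hε'
  have hε'0 : 0 < ε' := lt_min hε (by linarith)
  have hε'τ : ε' < τ := lt_of_le_of_lt (min_le_right _ _) (by linarith)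
  set a := ω ε' with ha
  have ha0 : 0 < a := by
    have := hstrict ⟨le_rfl, hτ⟩ ⟨hε'0.le, hε'τ⟩ hε'0
    rwa [hω0] at this
  have haw : ∀ n, ε' ≤ d n → a ≤ ω (d n) := fun n h =>
    hmono (mem_Ici.mpr hε'0.le) (mem_Ici.mpr (hd0 n)) h
  have hSfin : {n | ε' ≤ d n}.Finite := by
    by_contra hSinf
    rw [← Set.not_infinite, not_not] at hSinf
    have hgrow : ∀ k : ℕ, ∃ n ∈ {n | ε' ≤ d n}, (k : ℝ) * (sstar * a) ≤ cs n - cs 0 := by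
      intro k
      induction k with
      | zero =>
        obtain ⟨n, hn⟩ := hSinf.nonempty
        exact ⟨n, hn, by simpa using sub_nonneg.mpr (hmonoc (Nat.zero_le n))⟩
      | succ k ih =>
        obtain ⟨n, hnS, hn⟩ := ih
        obtain ⟨m, hmS, hm⟩ := hSinf.exists_gt n
        refine ⟨m, hmS, ?_⟩
        have hstep : cs n + sstar * a ≤ cs (n + 1) := by
          rw [hupd n]
          have h1 : sstar * a ≤ ss n * (ω (d n) + δs n) := by
            apply mul_le_mul (hss n) _ (by positivity) (le_trans hsstar.le (hss n))
            have := haw n hnS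
            linarith [hδ n]
          linarith
        have hmn := hmonoc (Nat.succ_le_of_lt hm)
        push_cast
        linarith
    obtain ⟨k, hk⟩ := exists_nat_gt (M / (sstar * a * a))
    obtain ⟨n, hnS, hn⟩ := hgrow k
    have h1 := hkey n
    have h2 := haw n hnS
    have hc : 0 ≤ cs n - cs 0 := sub_nonneg.mpr (hmonoc (Nat.zero_le n))
    have hkM : M < (k : ℝ) * (sstar * a * a) := by
      rwa [div_lt_iff₀ (by positivity)] at hk
    nlinarith
  obtain ⟨N, hN⟩ := hSfin.bddAbove
  refine ⟨N + 1, fun n hn => ?_⟩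
  have hnS : n ∉ {n | ε' ≤ d n} := fun h => by
    have := hN h
    omega
  simp only [Set.mem_setOf_eq, not_le] at hnS
  rw [Real.dist_eq, sub_zero, abs_of_nonneg (hd0 n)]
  exact lt_of_lt_of_le hnS (min_le_left _ _)
end

section
/- In the primal-dual rounded weighted ℓ₁-penalty method, suppose F(·, μ_0) is bounded below and the step sizes satisfy either s_n ≥ s* > 0 for all n, or s_n ≥ ω(‖p_n‖) for a nondecreasing function ω : ℝ₊ → ℝ₊ with ω(t) > 0 for t > 0. Then the infeasibility measure Σᵢ |hᵢ(x_n)| + Σⱼ max{0, gⱼ(x_n)} converges to 0 as n → ∞. -/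
open Filter Topology Metric Set

/-- Smoothed absolute value: η(t, w) = t²/(2w) if |t| < w, |t| − w/2 otherwise. -/
noncomputable def eta (t w : ℝ) : ℝ := if |t| < w then t ^ 2 / (2 * w) else |t| - w / 2

/-- Smoothed positive part. -/
noncomputable def gam (t w : ℝ) : ℝ :=
  if t ≤ 0 then 0 else if t < w then t ^ 2 / (2 * w) else t - w / 2


lemma eta_nonneg (t w : ℝ) : 0 ≤ eta t w := by
  unfold eta; split_ifs with h1
  · have hw : 0 < w := lt_of_le_of_lt (abs_nonneg t) h1
    positivity
  · push_neg at h1; linarith [abs_nonneg t]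

lemma gam_nonneg (t w : ℝ) : 0 ≤ gam t w := by
  unfold gam; split_ifs with h1 h2
  · exact le_refl 0
  · push_neg at h1
    have hw : 0 < w := lt_trans h1 h2
    positivity
  · push_neg at h1 h2; linarith

lemma eta_zero {w : ℝ} (hw : 0 ≤ w) : eta 0 w = 0 := by
  unfold eta; split_ifs with h1 <;> simp_all <;> linarith

lemma gam_nonpos {t w : ℝ} (ht : t ≤ 0) : gam t w = 0 := by simp [gam, ht]

lemma eta_anti (t : ℝ) {w w' : ℝ} (h0 : 0 ≤ w') (hww : w' ≤ w) : eta t w ≤ eta t w' := by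
  unfold eta; split_ifs with h1 h2
  · have hw' : 0 < w' := lt_of_le_of_lt (abs_nonneg t) h2
    rw [div_le_div_iff₀ (by linarith) (by linarith)]
    nlinarith [sq_nonneg t]
  · push_neg at h2
    have hw : 0 < w := lt_of_le_of_lt (abs_nonneg t) h1
    rw [div_le_iff₀ (by linarith)]
    nlinarith [sq_abs t, abs_nonneg t]
  · push_neg at h1; linarith [lt_of_lt_of_le ‹|t| < w'› hww]
  · linarith

lemma gam_anti (t : ℝ) {w w' : ℝ} (h0 : 0 ≤ w') (hww : w' ≤ w) : gam t w ≤ gam t w' := by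
  unfold gam
  by_cases ht : t ≤ 0
  · simp [ht]
  push_neg at ht
  simp only [not_le.mpr ht, if_false]
  split_ifs with h1 h2
  · have hw' : 0 < w' := lt_trans ht h2
    rw [div_le_div_iff₀ (by linarith) (by linarith)]
    nlinarith [sq_nonneg t]
  · push_neg at h2
    have hw : 0 < w := lt_trans ht h1
    rw [div_le_iff₀ (by linarith)]
    nlinarith
  · push_neg at h1; linarith [lt_of_lt_of_le ‹t < w'› hww]
  · linarith

lemma abs_le_eta (t : ℝ) {w W : ℝ} (hw : 0 ≤ w) (hW : w ≤ W) :
    |t| ≤ 2 * eta t w + Real.sqrt (2 * W * eta t w) := by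
  have he := eta_nonneg t w
  unfold eta at *
  split_ifs with h1
  · have hwp : 0 < w := lt_of_le_of_lt (abs_nonneg t) h1
    have key : t ^ 2 ≤ 2 * W * (t ^ 2 / (2 * w)) := by
      rw [mul_div_assoc', le_div_iff₀ (by linarith)]
      nlinarith [sq_nonneg t]
    calc |t| = Real.sqrt (t ^ 2) := (Real.sqrt_sq_eq_abs t).symm
      _ ≤ Real.sqrt (2 * W * (t ^ 2 / (2 * w))) := Real.sqrt_le_sqrt key
      _ ≤ _ := by split_ifs at he ⊢ <;> linarith
  · push_neg at h1
    have : w / 2 ≤ |t| - w / 2 := by linarith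
    have hs : 0 ≤ Real.sqrt (2 * W * (|t| - w / 2)) := Real.sqrt_nonneg _
    split_ifs at he <;> linarith

lemma pos_le_gam (t : ℝ) {w W : ℝ} (hw : 0 ≤ w) (hW : w ≤ W) :
    max 0 t ≤ 2 * gam t w + Real.sqrt (2 * W * gam t w) := by
  have he := gam_nonneg t w
  have hs : 0 ≤ Real.sqrt (2 * W * gam t w) := Real.sqrt_nonneg _
  by_cases ht : t ≤ 0
  · simp [gam_nonpos ht, max_eq_left ht] at *
  push_neg at ht
  rw [max_eq_right ht.le]
  unfold gam at *
  simp only [not_le.mpr ht, if_false] at *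
  split_ifs with h1
  · have hwp : 0 < w := lt_trans ht h1
    have key : t ^ 2 ≤ 2 * W * (t ^ 2 / (2 * w)) := by
      rw [mul_div_assoc', le_div_iff₀ (by linarith)]
      nlinarith [sq_nonneg t]
    calc t = Real.sqrt (t ^ 2) := by rw [Real.sqrt_sq ht.le]
      _ ≤ Real.sqrt (2 * W * (t ^ 2 / (2 * w))) := Real.sqrt_le_sqrt key
      _ ≤ _ := by split_ifs at he ⊢ <;> linarith
  · push_neg at h1
    split_ifs at he hs <;> linarith

lemma aux_tendsto (a s : ℕ → ℝ) (C : ℝ)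
    (ha : ∀ n, 0 ≤ a n)
    (hs : ∀ n, 0 ≤ s n)
    (key : ∀ n, (∑ k ∈ Finset.range n, s k * a k) * a n ≤ C)
    (hc : ∀ ε : ℝ, 0 < ε → ∃ c, 0 < c ∧ ∀ n, ε ≤ a n → c ≤ s n) :
    Tendsto a atTop (𝓝 0) := by
  rw [Metric.tendsto_atTop]
  intro ε hε
  by_contra hcon
  push_neg at hcon
  have hfreq : ∃ᶠ n in atTop, ε ≤ a n := by
    rw [frequently_atTop]
    intro N
    obtain ⟨n, hnN, hn⟩ := hcon N
    refine ⟨n, hnN, ?_⟩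
    rw [Real.dist_eq, sub_zero, abs_of_nonneg (ha n)] at hn
    linarith
  obtain ⟨φ, hφ, hφa⟩ := Filter.extraction_of_frequently_atTop hfreq
  obtain ⟨c, hcpos, hcs⟩ := hc ε hε
  obtain ⟨K, hK⟩ := exists_nat_gt (C / (c * ε * ε))
  have hCK : C < K * (c * ε * ε) := by
    rw [div_lt_iff₀ (by positivity)] at hK
    linarith
  -- lower bound on the partial sum at φ K
  have h1 : ∀ j < K, c * ε ≤ s (φ j) * a (φ j) := fun j _ =>
    mul_le_mul (hcs (φ j) (hφa j)) (hφa j) hε.le (hs (φ j))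
  have h2 : (K : ℝ) * (c * ε) ≤ ∑ j ∈ Finset.range K, s (φ j) * a (φ j) := by
    calc (K : ℝ) * (c * ε) = ∑ _j ∈ Finset.range K, c * ε := by
          rw [Finset.sum_const, Finset.card_range, nsmul_eq_mul]
      _ ≤ _ := Finset.sum_le_sum (fun j hj => h1 j (Finset.mem_range.mp hj))
  have h3 : ∑ j ∈ Finset.range K, s (φ j) * a (φ j)
      ≤ ∑ k ∈ Finset.range (φ K), s k * a k := by
    have himg : ∑ j ∈ Finset.range K, s (φ j) * a (φ j)
        = ∑ k ∈ (Finset.range K).image φ, s k * a k :=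
      (Finset.sum_image (f := fun k => s k * a k) (fun x _ y _ hxy => hφ.injective hxy)).symm
    rw [himg]
    apply Finset.sum_le_sum_of_subset_of_nonneg
    · intro x hx
      simp only [Finset.mem_image, Finset.mem_range] at hx ⊢
      obtain ⟨j, hj, rfl⟩ := hx
      exact hφ hj
    · exact fun k _ _ => mul_nonneg (hs k) (ha k)
  have h4 : (K : ℝ) * (c * ε) * ε ≤ (∑ k ∈ Finset.range (φ K), s k * a k) * a (φ K) :=
    mul_le_mul (le_trans h2 h3) (hφa K) hε.le
      (le_trans (by positivity) (le_trans h2 h3))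
  have := key (φ K)
  nlinarith

/-- in the primal-dual rounded weighted ℓ₁-penalty method, if F(·, μ₀) is
bounded below and either s_n ≥ s* > 0 or s_n ≥ ω(‖p_n‖) for a nondecreasing ω : ℝ₊ → ℝ₊
positive on (0, ∞), then the infeasibility measure Σᵢ|hᵢ(x_n)| + Σⱼ max{0, gⱼ(x_n)} → 0. -/
theorem rounded_weighted_penalty_infeasibility
    {X : Type*} [MetricSpace X] {m l : ℕ}
    (Q : Set X) (hQne : Q.Nonempty) (hQc : IsClosed Q)
    (f : X → ℝ) (h : X → Fin m → ℝ) (g : X → Fin l → ℝ)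
    (hfeas : {x | x ∈ Q ∧ (∀ i, h x i = 0) ∧ ∀ j, g x j ≤ 0}.Nonempty)
    (hfb : BddBelow (f '' {x | x ∈ Q ∧ (∀ i, h x i = 0) ∧ ∀ j, g x j ≤ 0}))
    (xs : ℕ → X) (us : ℕ → Fin m → ℝ) (vs : ℕ → Fin l → ℝ) (ws : ℕ → ℝ)
    (ss : ℕ → ℝ) (dus : ℕ → Fin m → ℝ) (dvs : ℕ → Fin l → ℝ) (εs : ℕ → ℝ)
    (hu0 : ∀ i, 0 ≤ us 0 i) (hv0 : ∀ j, 0 ≤ vs 0 j) (hw0 : 0 < ws 0)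
    (hwmono : ∀ n, ws (n + 1) ≤ ws n) (hwnn : ∀ n, 0 ≤ ws n)
    (hε0 : ∀ n, 0 ≤ εs n) (hεb : BddAbove (Set.range εs))
    (hspos : ∀ n, 0 < ss n) (hdu : ∀ n i, 0 ≤ dus n i) (hdv : ∀ n j, 0 ≤ dvs n j)
    (huupd : ∀ n i, us (n + 1) i = us n i + ss n * (eta (h (xs n) i) (ws n) + dus n i))
    (hvupd : ∀ n j, vs (n + 1) j = vs n j + ss n * (gam (g (xs n) j) (ws n) + dvs n j))
    (hxQ : ∀ n, xs n ∈ Q)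
    (hbdd : BddBelow ((fun x => f x + ∑ i, us 0 i * eta (h x i) (ws 0)
        + ∑ j, vs 0 j * gam (g x j) (ws 0)) '' Q))
    (hopt : ∀ n, ∀ x ∈ Q,
      f (xs n) + ∑ i, us n i * eta (h (xs n) i) (ws n)
          + ∑ j, vs n j * gam (g (xs n) j) (ws n) ≤
        f x + ∑ i, us n i * eta (h x i) (ws n)
          + ∑ j, vs n j * gam (g x j) (ws n) + εs n)
    (hstep : (∃ sstar : ℝ, 0 < sstar ∧ ∀ n, sstar ≤ ss n) ∨
      (∃ ω : ℝ → ℝ, MonotoneOn ω (Ici 0) ∧ (∀ t, 0 ≤ ω t) ∧ (∀ t, 0 < t → 0 < ω t) ∧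
        ∀ n, ω (Real.sqrt (∑ i, (eta (h (xs n) i) (ws n)) ^ 2
          + ∑ j, (gam (g (xs n) j) (ws n)) ^ 2)) ≤ ss n)) :
    Tendsto (fun n => ∑ i, |h (xs n) i| + ∑ j, max 0 (g (xs n) j)) atTop (𝓝 0) := by
  classical
  obtain ⟨xstar, hxsQ, hhs, hgs⟩ := hfeas
  obtain ⟨B, hB⟩ := hbdd
  obtain ⟨M, hM⟩ := hεb
  set C := f xstar + M - B with hC
  have hwle : ∀ n, ws n ≤ ws 0 := by
    intro n
    induction n with
    | zero => exact le_refl _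
    | succ n ih => exact le_trans (hwmono n) ih
  have hsumE : ∀ n i, 0 ≤ ∑ k ∈ Finset.range n, ss k * eta (h (xs k) i) (ws k) :=
    fun n i => Finset.sum_nonneg fun k _ => mul_nonneg (hspos k).le (eta_nonneg _ _)
  have hsumG : ∀ n j, 0 ≤ ∑ k ∈ Finset.range n, ss k * gam (g (xs k) j) (ws k) :=
    fun n j => Finset.sum_nonneg fun k _ => mul_nonneg (hspos k).le (gam_nonneg _ _)
  have humul : ∀ n i,
      us 0 i + ∑ k ∈ Finset.range n, ss k * eta (h (xs k) i) (ws k) ≤ us n i := by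
    intro n i
    induction n with
    | zero => simp
    | succ n ih =>
      rw [huupd n i, Finset.sum_range_succ]
      have h2 : ss n * eta (h (xs n) i) (ws n) ≤
          ss n * (eta (h (xs n) i) (ws n) + dus n i) :=
        mul_le_mul_of_nonneg_left (by linarith [hdu n i]) (hspos n).le
      linarith
  have hvmul : ∀ n j,
      vs 0 j + ∑ k ∈ Finset.range n, ss k * gam (g (xs k) j) (ws k) ≤ vs n j := by
    intro n j
    induction n with
    | zero => simp
    | succ n ih =>
      rw [hvupd n j, Finset.sum_range_succ]
      have h2 : ss n * gam (g (xs n) j) (ws n) ≤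
          ss n * (gam (g (xs n) j) (ws n) + dvs n j) :=
        mul_le_mul_of_nonneg_left (by linarith [hdv n j]) (hspos n).le
      linarith
  have husub : ∀ n i, 0 ≤ us n i - us 0 i := fun n i => by
    have := humul n i; have := hsumE n i; linarith
  have hvsub : ∀ n j, 0 ≤ vs n j - vs 0 j := fun n j => by
    have := hvmul n j; have := hsumG n j; linarith
  -- the key bound
  have keyC : ∀ n,
      ∑ i, (us n i - us 0 i) * eta (h (xs n) i) (ws n)
        + ∑ j, (vs n j - vs 0 j) * gam (g (xs n) j) (ws n) ≤ C := by
    intro n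
    have hopt' := hopt n xstar hxsQ
    have hz1 : ∀ i : Fin m, eta (h xstar i) (ws n) = 0 := fun i => by
      rw [hhs i]; exact eta_zero (hwnn n)
    have hz2 : ∀ j : Fin l, gam (g xstar j) (ws n) = 0 := fun j => gam_nonpos (hgs j)
    simp only [hz1, hz2, mul_zero, Finset.sum_const_zero, add_zero] at hopt'
    have hMn : εs n ≤ M := hM (Set.mem_range_self n)
    have hBn : B ≤ f (xs n) + ∑ i, us 0 i * eta (h (xs n) i) (ws 0)
        + ∑ j, vs 0 j * gam (g (xs n) j) (ws 0) := hB ⟨xs n, hxQ n, rfl⟩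
    have ht1 : ∑ i, us 0 i * eta (h (xs n) i) (ws 0)
        + ∑ i, (us n i - us 0 i) * eta (h (xs n) i) (ws n)
        ≤ ∑ i, us n i * eta (h (xs n) i) (ws n) := by
      rw [← Finset.sum_add_distrib]
      apply Finset.sum_le_sum
      intro i _
      have h1 : eta (h (xs n) i) (ws 0) ≤ eta (h (xs n) i) (ws n) :=
        eta_anti _ (hwnn n) (hwle n)
      have h2 := hu0 i
      nlinarith
    have ht2 : ∑ j, vs 0 j * gam (g (xs n) j) (ws 0)
        + ∑ j, (vs n j - vs 0 j) * gam (g (xs n) j) (ws n)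
        ≤ ∑ j, vs n j * gam (g (xs n) j) (ws n) := by
      rw [← Finset.sum_add_distrib]
      apply Finset.sum_le_sum
      intro j _
      have h1 : gam (g (xs n) j) (ws 0) ≤ gam (g (xs n) j) (ws n) :=
        gam_anti _ (hwnn n) (hwle n)
      have h2 := hv0 j
      nlinarith
    rw [hC]; linarith
  -- step-size lower bound
  have hcstep : ∀ (a : ℕ → ℝ),
      (∀ n, a n ^ 2 ≤ ∑ i, (eta (h (xs n) i) (ws n)) ^ 2
        + ∑ j, (gam (g (xs n) j) (ws n)) ^ 2) → (∀ n, 0 ≤ a n) →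
      ∀ ε : ℝ, 0 < ε → ∃ c, 0 < c ∧ ∀ n, ε ≤ a n → c ≤ ss n := by
    intro a hale hann ε hε
    rcases hstep with ⟨sstar, hsp, hsb⟩ | ⟨ω, hmono, hωnn, hωpos, hωb⟩
    · exact ⟨sstar, hsp, fun n _ => hsb n⟩
    · refine ⟨ω ε, hωpos ε hε, fun n hn => ?_⟩
      refine le_trans ?_ (hωb n)
      apply hmono (mem_Ici.mpr hε.le) (mem_Ici.mpr (Real.sqrt_nonneg _))
      calc ε ≤ a n := hn
        _ = Real.sqrt (a n ^ 2) := (Real.sqrt_sq (hann n)).symm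
        _ ≤ _ := Real.sqrt_le_sqrt (hale n)
  -- coordinatewise convergence of eta
  have hEtend : ∀ i, Tendsto (fun n => eta (h (xs n) i) (ws n)) atTop (𝓝 0) := by
    intro i
    apply aux_tendsto _ ss C (fun n => eta_nonneg _ _) (fun n => (hspos n).le)
    · intro n
      have h1 : (us n i - us 0 i) * eta (h (xs n) i) (ws n) ≤ C := by
        have hk := keyC n
        have hs1 : (us n i - us 0 i) * eta (h (xs n) i) (ws n)
            ≤ ∑ i', (us n i' - us 0 i') * eta (h (xs n) i') (ws n) :=
          Finset.single_le_sum
            (fun i' _ => mul_nonneg (husub n i') (eta_nonneg _ _)) (Finset.mem_univ i)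
        have hs2 : (0:ℝ) ≤ ∑ j, (vs n j - vs 0 j) * gam (g (xs n) j) (ws n) :=
          Finset.sum_nonneg fun j _ => mul_nonneg (hvsub n j) (gam_nonneg _ _)
        linarith
      have h2 : ∑ k ∈ Finset.range n, ss k * eta (h (xs k) i) (ws k) ≤ us n i - us 0 i := by
        have := humul n i; linarith
      exact le_trans (mul_le_mul_of_nonneg_right h2 (eta_nonneg _ _)) h1
    · apply hcstep _ ?_ (fun n => eta_nonneg _ _)
      intro n
      have hs1 : eta (h (xs n) i) (ws n) ^ 2 ≤ ∑ i', (eta (h (xs n) i') (ws n)) ^ 2 :=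
        Finset.single_le_sum (f := fun i' => (eta (h (xs n) i') (ws n)) ^ 2) (fun i' _ => sq_nonneg _) (Finset.mem_univ i)
      have hs2 : (0:ℝ) ≤ ∑ j, (gam (g (xs n) j) (ws n)) ^ 2 :=
        Finset.sum_nonneg fun j _ => sq_nonneg _
      linarith
  have hGtend : ∀ j, Tendsto (fun n => gam (g (xs n) j) (ws n)) atTop (𝓝 0) := by
    intro j
    apply aux_tendsto _ ss C (fun n => gam_nonneg _ _) (fun n => (hspos n).le)
    · intro n
      have h1 : (vs n j - vs 0 j) * gam (g (xs n) j) (ws n) ≤ C := by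
        have hk := keyC n
        have hs1 : (vs n j - vs 0 j) * gam (g (xs n) j) (ws n)
            ≤ ∑ j', (vs n j' - vs 0 j') * gam (g (xs n) j') (ws n) :=
          Finset.single_le_sum
            (fun j' _ => mul_nonneg (hvsub n j') (gam_nonneg _ _)) (Finset.mem_univ j)
        have hs2 : (0:ℝ) ≤ ∑ i, (us n i - us 0 i) * eta (h (xs n) i) (ws n) :=
          Finset.sum_nonneg fun i _ => mul_nonneg (husub n i) (eta_nonneg _ _)
        linarith
      have h2 : ∑ k ∈ Finset.range n, ss k * gam (g (xs k) j) (ws k) ≤ vs n j - vs 0 j := by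
        have := hvmul n j; linarith
      exact le_trans (mul_le_mul_of_nonneg_right h2 (gam_nonneg _ _)) h1
    · apply hcstep _ ?_ (fun n => gam_nonneg _ _)
      intro n
      have hs1 : gam (g (xs n) j) (ws n) ^ 2 ≤ ∑ j', (gam (g (xs n) j') (ws n)) ^ 2 :=
        Finset.single_le_sum (f := fun j' => (gam (g (xs n) j') (ws n)) ^ 2) (fun j' _ => sq_nonneg _) (Finset.mem_univ j)
      have hs2 : (0:ℝ) ≤ ∑ i, (eta (h (xs n) i) (ws n)) ^ 2 :=
        Finset.sum_nonneg fun i _ => sq_nonneg _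
      linarith
  -- upper envelope tends to zero
  have henv : ∀ (u : ℕ → ℝ), Tendsto u atTop (𝓝 0) →
      Tendsto (fun n => 2 * u n + Real.sqrt (2 * ws 0 * u n)) atTop (𝓝 0) := by
    intro u hu
    have h1 : Tendsto (fun n => 2 * u n) atTop (𝓝 0) := by
      simpa using hu.const_mul 2
    have h2 : Tendsto (fun n => Real.sqrt (2 * ws 0 * u n)) atTop (𝓝 0) := by
      have h3 : Tendsto (fun n => 2 * ws 0 * u n) atTop (𝓝 0) := by
        simpa using hu.const_mul (2 * ws 0)
      have h4 := (Real.continuous_sqrt.tendsto 0).comp h3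
      simpa [Function.comp_def] using h4
    simpa using h1.add h2
  have hψ : Tendsto (fun n =>
      ∑ i, (2 * eta (h (xs n) i) (ws n) + Real.sqrt (2 * ws 0 * eta (h (xs n) i) (ws n)))
      + ∑ j, (2 * gam (g (xs n) j) (ws n)
        + Real.sqrt (2 * ws 0 * gam (g (xs n) j) (ws n)))) atTop (𝓝 0) := by
    have hA : Tendsto (fun n => ∑ i, (2 * eta (h (xs n) i) (ws n)
        + Real.sqrt (2 * ws 0 * eta (h (xs n) i) (ws n)))) atTop (𝓝 0) := by
      have := tendsto_finset_sum (Finset.univ : Finset (Fin m))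
        (fun i _ => henv _ (hEtend i))
      simpa using this
    have hB' : Tendsto (fun n => ∑ j, (2 * gam (g (xs n) j) (ws n)
        + Real.sqrt (2 * ws 0 * gam (g (xs n) j) (ws n)))) atTop (𝓝 0) := by
      have := tendsto_finset_sum (Finset.univ : Finset (Fin l))
        (fun j _ => henv _ (hGtend j))
      simpa using this
    simpa using hA.add hB'
  apply squeeze_zero ?_ ?_ hψ
  · intro n
    apply add_nonneg
    · exact Finset.sum_nonneg fun i _ => abs_nonneg _
    · exact Finset.sum_nonneg fun j _ => le_max_left _ _
  · intro n
    apply add_le_add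
    · exact Finset.sum_le_sum fun i _ => abs_le_eta _ (hwnn n) (hwle n)
    · exact Finset.sum_le_sum fun j _ => pos_le_gam _ (hwnn n) (hwle n)
end

section
/- Let Q be compact, h continuous on Q, and f and each gⱼ lower semicontinuous on Q. Then the perturbation function β(y) = inf{ f(x) : x ∈ Q, hᵢ(x) = yᵢ (i ≤ m), gⱼ(x) ≤ y_{m+j} (j ≤ ℓ) } is lower semicontinuous at the origin. -/
open Filter Topology Metric Set

/-- if Q is compact, h is continuous on Q, and f and each gⱼ are lsc on Q,
then the perturbation function
β(y) = inf{ f(x) : x ∈ Q, hᵢ(x) = yᵢ, gⱼ(x) ≤ y_{m+j} } is lsc at the origin: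
β(0) ≤ liminf_{y → 0} β(y). -/
theorem perturbation_function_lsc
    {X : Type*} [MetricSpace X] {m l : ℕ}
    (Q : Set X) (hQcpt : IsCompact Q) (hQne : Q.Nonempty)
    (f : X → ℝ) (h : X → Fin m → ℝ) (g : X → Fin l → ℝ)
    (hfeas : {x | x ∈ Q ∧ (∀ i, h x i = 0) ∧ ∀ j, g x j ≤ 0}.Nonempty)
    (hh : ∀ i, ContinuousOn (fun x => h x i) Q)
    (hf : LowerSemicontinuousOn f Q)
    (hg : ∀ j, LowerSemicontinuousOn (fun x => g x j) Q)
    (β : (Fin m → ℝ) × (Fin l → ℝ) → EReal)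
    (hβ : β = fun y =>
      ⨅ x ∈ {x | x ∈ Q ∧ (∀ i, h x i = y.1 i) ∧ ∀ j, g x j ≤ y.2 j}, (f x : EReal)) :
    β 0 ≤ Filter.liminf β (𝓝[≠] (0 : (Fin m → ℝ) × (Fin l → ℝ))) := by
  rw [le_liminf_iff]
  intro b hb
  by_contra hcon
  rw [not_eventually] at hcon
  obtain ⟨c, hbc, hcβ⟩ := EReal.exists_between_coe_real hb
  obtain ⟨y, hy_tendsto, hy⟩ := Filter.exists_seq_forall_of_frequently hcon
  have hx : ∀ n, ∃ x, (x ∈ Q ∧ (∀ i, h x i = (y n).1 i) ∧ ∀ j, g x j ≤ (y n).2 j) ∧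
      f x < c := by
    intro n
    have hlt : β (y n) < (c : EReal) := lt_of_le_of_lt (not_lt.1 (hy n)) hbc
    rw [hβ] at hlt
    simp only [iInf_lt_iff, Set.mem_setOf_eq] at hlt
    obtain ⟨x, hx1, hx2⟩ := hlt
    exact ⟨x, hx1, by exact_mod_cast hx2⟩
  choose x hxmem hxlt using hx
  obtain ⟨z, hzQ, φ, hφ, hxz⟩ := hQcpt.tendsto_subseq (fun n => (hxmem n).1)
  have hy0 : Tendsto y atTop (𝓝 (0 : (Fin m → ℝ) × (Fin l → ℝ))) :=
    hy_tendsto.mono_right nhdsWithin_le_nhds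
  have hy1 : ∀ i, Tendsto (fun n => (y (φ n)).1 i) atTop (𝓝 0) := by
    intro i
    have : Tendsto (fun n => (y n).1 i) atTop (𝓝 ((0 : (Fin m → ℝ) × (Fin l → ℝ)).1 i)) :=
      (((continuous_apply i).comp continuous_fst).tendsto _).comp hy0
    simpa [Function.comp_def] using this.comp hφ.tendsto_atTop
  have hy2 : ∀ j, Tendsto (fun n => (y (φ n)).2 j) atTop (𝓝 0) := by
    intro j
    have : Tendsto (fun n => (y n).2 j) atTop (𝓝 ((0 : (Fin m → ℝ) × (Fin l → ℝ)).2 j)) :=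
      (((continuous_apply j).comp continuous_snd).tendsto _).comp hy0
    simpa [Function.comp_def] using this.comp hφ.tendsto_atTop
  have hxzQ : Tendsto (fun n => x (φ n)) atTop (𝓝[Q] z) :=
    tendsto_nhdsWithin_of_tendsto_nhds_of_eventually_within _ hxz
      (Eventually.of_forall fun n => (hxmem (φ n)).1)
  -- h z = 0
  have hhz : ∀ i, h z i = 0 := by
    intro i
    have h1 : Tendsto (fun n => h (x (φ n)) i) atTop (𝓝 (h z i)) :=
      ((hh i z hzQ).tendsto).comp hxzQ
    have h2 : Tendsto (fun n => h (x (φ n)) i) atTop (𝓝 0) := by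
      have := hy1 i
      refine this.congr fun n => ?_
      exact ((hxmem (φ n)).2.1 i).symm
    exact tendsto_nhds_unique h1 h2
  -- g z ≤ 0
  have hgz : ∀ j, g z j ≤ 0 := by
    intro j
    by_contra hpos
    push_neg at hpos
    obtain ⟨c', hc'0, hc'g⟩ := exists_between hpos
    have h1 : ∀ᶠ n in atTop, c' < g (x (φ n)) j :=
      hxzQ.eventually ((hg j z hzQ) c' hc'g)
    have h2 : ∀ᶠ n in atTop, (y (φ n)).2 j < c' :=
      (hy2 j).eventually (eventually_lt_nhds hc'0)
    obtain ⟨n, hn1, hn2⟩ := (h1.and h2).exists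
    exact absurd (lt_of_lt_of_le hn1 ((hxmem (φ n)).2.2 j)) (not_lt.2 hn2.le)
  -- f z ≤ c
  have hfz : f z ≤ c := by
    by_contra hc
    push_neg at hc
    have h1 : ∀ᶠ n in atTop, c < f (x (φ n)) :=
      hxzQ.eventually ((hf z hzQ) c hc)
    obtain ⟨n, hn⟩ := h1.exists
    exact absurd (hxlt (φ n)) (not_lt.2 hn.le)
  -- contradiction with β 0 > c
  have hβ0 : β 0 ≤ (f z : EReal) := by
    rw [hβ]
    exact iInf₂_le z ⟨hzQ, by simpa using hhz, by simpa using hgz⟩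
  have : β 0 ≤ (c : EReal) := hβ0.trans (by exact_mod_cast hfz)
  exact absurd (this.trans_lt hcβ) (lt_irrefl _)
end

section
/- Let Y be a Hilbert space, K ⊆ Y a closed convex cone, K* its polar cone, and λ ∈ K*, c > 0. If κ := ‖Π_{K*}(λ + cG(x)) − λ‖, then ‖Π_{K*}(G(x))‖² ≤ (2κ/c)‖Π_K(G(x))‖ + κ²/c², where Π_K and Π_{K*} are the metric projections onto K and K*. In particular, dist(G(x), K) = ‖Π_{K*}(G(x))‖ is small whenever κ/c is small and ‖Π_K(G(x))‖ is bounded. -/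
open Filter Topology Metric Set

/-- Variational inequality for a minimizer of the distance to a convex set. -/
lemma var_ineq_aux {Y : Type*} [NormedAddCommGroup Y] [InnerProductSpace ℝ Y]
    {C : Set Y} (hC : Convex ℝ C) {p y : Y} (hp : p ∈ C)
    (hmin : ∀ z ∈ C, ‖y - p‖ ≤ ‖y - z‖) :
    ∀ z ∈ C, inner ℝ (y - p) (z - p) ≤ (0 : ℝ) := by
  haveI : Nonempty C := ⟨⟨p, hp⟩⟩
  rw [← norm_eq_iInf_iff_real_inner_le_zero hC hp]
  refine le_antisymm (le_ciInf fun w => hmin w w.2) ?_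
  have hbdd : BddBelow (Set.range fun w : C => ‖y - (w : Y)‖) :=
    ⟨0, by rintro x ⟨w, rfl⟩; exact norm_nonneg _⟩
  exact ciInf_le hbdd ⟨p, hp⟩

/-- in a Hilbert space with a closed convex cone K with polar cone K*,
given λ ∈ K*, c > 0, and κ = ‖Π_{K*}(λ + cv) − λ‖ (v = G(x)), the projections satisfy
‖Π_{K*}(v)‖² ≤ (2κ/c)‖Π_K(v)‖ + κ²/c², and dist(v, K) = ‖Π_{K*}(v)‖. -/
theorem projection_infeasibility_estimate
    {Y : Type*} [NormedAddCommGroup Y] [InnerProductSpace ℝ Y] [CompleteSpace Y]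
    (K : Set Y) (hKc : IsClosed K) (hKconv : Convex ℝ K)
    (hKcone : ∀ a : ℝ, 0 ≤ a → ∀ y ∈ K, a • y ∈ K) (hK0 : (0 : Y) ∈ K)
    (Ks : Set Y) (hKs : Ks = {z : Y | ∀ y ∈ K, inner ℝ z y ≤ (0 : ℝ)})
    (projK projKs : Y → Y)
    (hprojK : ∀ y : Y, projK y ∈ K ∧ ∀ z ∈ K, ‖y - projK y‖ ≤ ‖y - z‖)
    (hprojKs : ∀ y : Y, projKs y ∈ Ks ∧ ∀ z ∈ Ks, ‖y - projKs y‖ ≤ ‖y - z‖)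
    (lam : Y) (hlam : lam ∈ Ks) (c : ℝ) (hc : 0 < c)
    (v : Y) (κ : ℝ) (hκ : κ = ‖projKs (lam + c • v) - lam‖) :
    ‖projKs v‖ ^ 2 ≤ (2 * κ / c) * ‖projK v‖ + κ ^ 2 / c ^ 2 ∧
      infDist v K = ‖projKs v‖ := by
  have hκ0 : 0 ≤ κ := hκ ▸ norm_nonneg _
  set p := projK v with hp
  set s := v - p with hs
  obtain ⟨hpK, hpmin⟩ := hprojK v
  obtain ⟨hsKs', hsmin⟩ := hprojKs v
  obtain ⟨hwKs, hwmin⟩ := hprojKs (lam + c • v)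
  set w := projKs (lam + c • v) with hw
  -- variational inequality for the projection on K
  have hvK : ∀ z ∈ K, inner ℝ (v - p) (z - p) ≤ (0 : ℝ) :=
    var_ineq_aux hKconv hpK hpmin
  -- ⟨s, p⟩ = 0
  have hsp : inner ℝ s p = (0 : ℝ) := by
    have h1 := hvK 0 hK0
    have h2 := hvK ((2 : ℝ) • p) (hKcone 2 (by norm_num) p hpK)
    rw [zero_sub, inner_neg_right] at h1
    have h2p : (2 : ℝ) • p - p = p := by
      rw [two_smul]; abel
    rw [h2p] at h2
    rw [hs]; linarith
  -- s ∈ Ks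
  have hsKs : s ∈ Ks := by
    rw [hKs]
    intro y hy
    have h := hvK y hy
    rw [inner_sub_right, ← hs, hsp] at h
    show inner ℝ s y ≤ (0 : ℝ)
    linarith
  -- Ks is convex
  have hKsconv : Convex ℝ Ks := by
    rw [hKs]
    intro a ha b hb ta tb hta htb hab
    simp only [Set.mem_setOf_eq] at *
    intro y hy
    have h1 := ha y hy
    have h2 := hb y hy
    rw [inner_add_left, real_inner_smul_left, real_inner_smul_left]
    nlinarith
  -- Ks is closed under addition
  have hKsadd : ∀ a ∈ Ks, ∀ b ∈ Ks, a + b ∈ Ks := by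
    rw [hKs]
    intro a ha b hb
    simp only [Set.mem_setOf_eq] at *
    intro y hy
    have h1 := ha y hy
    have h2 := hb y hy
    rw [inner_add_left]
    linarith
  -- projKs v = s, via variational inequalities
  have hvKs : ∀ z ∈ Ks, inner ℝ (v - projKs v) (z - projKs v) ≤ (0 : ℝ) :=
    var_ineq_aux hKsconv hsKs' hsmin
  have hproj_eq : projKs v = s := by
    have h1 := hvKs s hsKs
    have h2 : inner ℝ (v - s) (projKs v - s) ≤ (0 : ℝ) := by
      have hps' : inner ℝ p (projKs v) ≤ (0 : ℝ) := by
        have := hKs ▸ hsKs'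
        have hK' : inner ℝ (projKs v) p ≤ (0 : ℝ) := this p hpK
        rwa [real_inner_comm] at hK'
      have hvs : v - s = p := by rw [hs]; abel
      rw [hvs, inner_sub_right]
      have hps0 : inner ℝ p s = (0 : ℝ) := by rw [real_inner_comm]; exact hsp
      rw [hps0]; linarith
    have hkey : ‖s - projKs v‖ ^ 2 ≤ 0 := by
      have expand : (inner ℝ ((v - projKs v) - (v - s)) (s - projKs v) : ℝ)
          = inner ℝ (v - projKs v) (s - projKs v) - inner ℝ (v - s) (s - projKs v) :=
        inner_sub_left _ _ _
      have e : (v - projKs v) - (v - s) = s - projKs v := by abel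
      rw [e] at expand
      have h2' : (inner ℝ (v - s) (s - projKs v) : ℝ) = - inner ℝ (v - s) (projKs v - s) := by
        rw [show s - projKs v = -(projKs v - s) from by abel, inner_neg_right]
      have hfin : inner ℝ (s - projKs v) (s - projKs v) ≤ (0 : ℝ) := by
        rw [expand, h2']
        linarith
      rwa [real_inner_self_eq_norm_sq] at hfin
    have : ‖s - projKs v‖ = 0 :=
      le_antisymm (by nlinarith [norm_nonneg (s - projKs v)]) (norm_nonneg _)
    have := norm_sub_eq_zero_iff.mp this
    exact this.symm
  -- variational inequality for w := projKs (lam + c • v)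
  have hwvar : ∀ z ∈ Ks, inner ℝ (lam + c • v - w) (z - w) ≤ (0 : ℝ) :=
    var_ineq_aux hKsconv hwKs hwmin
  have hkey : c * ‖s‖ ^ 2 ≤ κ * ‖s‖ := by
    have h1 := hwvar (w + s) (hKsadd w hwKs s hsKs)
    rw [add_sub_cancel_left] at h1
    -- inner ℝ (lam + c•v - w) s ≤ 0
    have h2 : inner ℝ lam s + c * inner ℝ v s - inner ℝ w s ≤ (0 : ℝ) := by
      have e : lam + c • v - w = lam + c • v - w := rfl
      rw [sub_eq_add_neg, inner_add_left, inner_add_left, inner_neg_left,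
        real_inner_smul_left] at h1
      linarith
    have hvs : inner ℝ v s = ‖s‖ ^ 2 := by
      have hvps : v = p + s := by rw [hs]; abel
      have hps0 : inner ℝ p s = (0 : ℝ) := by rw [real_inner_comm]; exact hsp
      rw [hvps, inner_add_left, hps0, real_inner_self_eq_norm_sq]
      ring
    have hcs : inner ℝ (w - lam) s ≤ κ * ‖s‖ := by
      calc inner ℝ (w - lam) s ≤ ‖w - lam‖ * ‖s‖ := real_inner_le_norm _ _
        _ = κ * ‖s‖ := by rw [hκ]
    rw [inner_sub_left] at hcs
    rw [hvs] at h2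
    linarith
  constructor
  · -- the inequality
    rw [hproj_eq]
    rcases eq_or_lt_of_le (norm_nonneg s) with h0 | h0
    · rw [← h0]
      have h1 : 0 ≤ 2 * κ / c * ‖projK v‖ :=
        mul_nonneg (div_nonneg (by linarith) hc.le) (norm_nonneg _)
      have h2 : 0 ≤ κ ^ 2 / c ^ 2 := div_nonneg (sq_nonneg _) (sq_nonneg _)
      nlinarith
    · have h3 : c * ‖s‖ ≤ κ := by
        nlinarith [hkey, h0]
      have h4 : ‖s‖ ≤ κ / c := (le_div_iff₀ hc).2 (by linarith)
      have h5 : ‖s‖ ^ 2 ≤ (κ / c) ^ 2 := by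
        apply pow_le_pow_left₀ (norm_nonneg _) h4
      have h6 : (κ / c) ^ 2 = κ ^ 2 / c ^ 2 := div_pow κ c 2
      have h7 : 0 ≤ 2 * κ / c * ‖projK v‖ :=
        mul_nonneg (div_nonneg (by linarith) hc.le) (norm_nonneg _)
      linarith
  · -- infDist v K = ‖projKs v‖
    rw [hproj_eq]
    refine le_antisymm ?_ ?_
    · calc infDist v K ≤ dist v p := infDist_le_dist_of_mem hpK
        _ = ‖v - p‖ := dist_eq_norm _ _
        _ = ‖s‖ := by rw [hs]
    · haveI : Nonempty K := ⟨⟨p, hpK⟩⟩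
      rw [infDist_eq_iInf]
      refine le_ciInf fun z => ?_
      rw [dist_eq_norm]
      calc ‖s‖ = ‖v - p‖ := by rw [hs]
        _ ≤ ‖v - z‖ := hpmin z z.2
end
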